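/- Every T₁ star-Lindelöf space satisfies the discrete countable chain condition (DCCC): every discrete family of nonempty open sets is countable. -/
import Mathlib


open Set

/-- The dominating number 𝔡: least cardinality of a dominating family in ℕ^ℕ. -/
noncomputable def dominatingNumber : Cardinal :=
  sInf { c | ∃ D : Set (ℕ → ℕ),
    (∀ g : ℕ → ℕ, ∃ f ∈ D, ∀ᶠ n in Filter.atTop, g n ≤ f n) ∧ c = Cardinal.mk D }

/-- `U` is an open cover of the space `X`. -/
def IsOpenCover {X : Type*} [TopologicalSpace X] (U : Set (Set X)) : Prop :=
  (∀ u ∈ U, IsOpen u) ∧ ⋃₀ U = Set.univ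

/-- The star of a set `A` with respect to a family `U`. -/
def starOf {X : Type*} (A : Set X) (U : Set (Set X)) : Set X :=
  ⋃₀ {B | B ∈ U ∧ (A ∩ B).Nonempty}

/-- The star-Scheepers property (ω-cover form). -/
def StarScheepers (X : Type*) [TopologicalSpace X] : Prop :=
  ∀ U : ℕ → Set (Set X), (∀ n, IsOpenCover (U n)) →
    ∃ V : ℕ → Set (Set X), (∀ n, V n ⊆ U n ∧ (V n).Finite) ∧
      ∀ F : Set X, F.Finite → ∃ n, F ⊆ starOf (⋃₀ V n) (U n)

/-- The strongly star-Scheepers property. -/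
def StronglyStarScheepers (X : Type*) [TopologicalSpace X] : Prop :=
  ∀ U : ℕ → Set (Set X), (∀ n, IsOpenCover (U n)) →
    ∃ F : ℕ → Set X, (∀ n, (F n).Finite) ∧
      ∀ G : Set X, G.Finite → ∃ n, G ⊆ starOf (F n) (U n)

theorem stmt_17 {X : Type*} [TopologicalSpace X] [T1Space X]
    (hSL : ∀ U : Set (Set X), IsOpenCover U →
      ∃ V ⊆ U, V.Countable ∧ starOf (⋃₀ V) U = Set.univ)
    (D : Set (Set X)) (hD : ∀ d ∈ D, IsOpen d ∧ d.Nonempty)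
    (hdisc : ∀ x : X, ∃ N ∈ nhds x, {d ∈ D | (N ∩ d).Nonempty}.Subsingleton) :
    D.Countable := by
  classical
  set p : D → X := fun d => (hD d.1 d.2).2.some with hpdef
  have hp : ∀ d : D, p d ∈ (d : Set X) := fun d => (hD d.1 d.2).2.some_mem
  -- a good open neighbourhood of each point
  have hW : ∀ x : X, ∃ W : Set X, IsOpen W ∧ x ∈ W ∧
      {d ∈ D | (W ∩ d).Nonempty}.Subsingleton := by
    intro x
    obtain ⟨N, hN, hNs⟩ := hdisc x
    refine ⟨interior N, isOpen_interior, mem_interior_iff_mem_nhds.2 hN, ?_⟩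
    intro a ha b hb
    exact hNs ⟨ha.1, ha.2.mono (inter_subset_inter_left _ interior_subset)⟩
      ⟨hb.1, hb.2.mono (inter_subset_inter_left _ interior_subset)⟩
  have hpinj : Function.Injective p := by
    intro d e h
    obtain ⟨W, hWo, hWx, hWs⟩ := hW (p d)
    have hd : (W ∩ (d : Set X)).Nonempty := ⟨p d, hWx, hp d⟩
    have he : (W ∩ (e : Set X)).Nonempty := ⟨p d, hWx, h ▸ hp e⟩
    exact Subtype.ext (hWs ⟨d.2, hd⟩ ⟨e.2, he⟩)
  -- every subset of the range of p is closed
  have hclosed : ∀ T ⊆ Set.range p, IsClosed T := by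
    intro T hT
    rw [← closure_subset_iff_isClosed]
    intro x hx
    by_contra hxT
    obtain ⟨W, hWo, hWx, hWs⟩ := hW x
    obtain ⟨y, hyW, hyT⟩ := mem_closure_iff.1 hx W hWo hWx
    obtain ⟨d, rfl⟩ := hT hyT
    have hxy : x ≠ p d := fun h => hxT (h ▸ hyT)
    obtain ⟨y', hy'W, hy'T⟩ := mem_closure_iff.1 hx (W \ {p d})
      (hWo.sdiff isClosed_singleton) ⟨hWx, hxy⟩
    obtain ⟨e, rfl⟩ := hT hy'T
    have hne : p e ≠ p d := fun h => hy'W.2 h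
    have hc : (e : Set X) = (d : Set X) :=
      hWs ⟨e.2, ⟨p e, hy'W.1, hp e⟩⟩ ⟨d.2, ⟨p d, hyW, hp d⟩⟩
    exact hne (congrArg p (Subtype.ext hc))
  -- for each point a cover element
  have hUx : ∀ x : X, ∃ B : Set X, IsOpen B ∧ x ∈ B ∧
      {d ∈ D | (B ∩ d).Nonempty}.Subsingleton ∧
      (∀ d : D, p d ∈ B → B ⊆ (d : Set X)) := by
    intro x
    obtain ⟨W, hWo, hWx, hWs⟩ := hW x
    by_cases hxS : x ∈ Set.range p
    · obtain ⟨d, rfl⟩ := hxS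
      refine ⟨(W ∩ (d : Set X)) \ (Set.range p \ {p d}),
        (hWo.inter (hD d.1 d.2).1).sdiff (hclosed _ diff_subset),
        ⟨⟨hWx, hp d⟩, fun h => h.2 rfl⟩, ?_, ?_⟩
      · intro a ha b hb
        exact hWs ⟨ha.1, ha.2.mono (fun z hz => ⟨hz.1.1.1, hz.2⟩)⟩
          ⟨hb.1, hb.2.mono (fun z hz => ⟨hz.1.1.1, hz.2⟩)⟩
      · intro e he
        have hpe : p e = p d := by
          by_contra hne
          exact he.2 ⟨⟨e, rfl⟩, hne⟩
        have : e = d := hpinj hpe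
        subst this
        exact fun z hz => hz.1.2
    · refine ⟨W \ Set.range p, hWo.sdiff (hclosed _ subset_rfl),
        ⟨hWx, hxS⟩, ?_, ?_⟩
      · intro a ha b hb
        exact hWs ⟨ha.1, ha.2.mono (fun z hz => ⟨hz.1.1, hz.2⟩)⟩
          ⟨hb.1, hb.2.mono (fun z hz => ⟨hz.1.1, hz.2⟩)⟩
      · intro e he
        exact absurd ⟨e, rfl⟩ he.2
  choose Ux hUo hUmem hUsub hUd using hUx
  -- the open cover
  have hcov : IsOpenCover (Set.range Ux) := by
    constructor
    · rintro u ⟨x, rfl⟩; exact hUo x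
    · ext x
      simp only [mem_sUnion, mem_univ, iff_true]
      exact ⟨Ux x, ⟨x, rfl⟩, hUmem x⟩
  obtain ⟨V, hVU, hVc, hVstar⟩ := hSL _ hcov
  -- each d meets some member of V
  have key : ∀ d : D, ∃ v ∈ V, ((d : Set X) ∩ v).Nonempty := by
    intro d
    have : p d ∈ starOf (⋃₀ V) (Set.range Ux) := hVstar ▸ mem_univ _
    obtain ⟨B, ⟨hBU, hBne⟩, hpB⟩ := this
    obtain ⟨x, rfl⟩ := hBU
    have hBd : Ux x ⊆ (d : Set X) := hUd x d hpB
    obtain ⟨y, hyV, hyB⟩ := hBne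
    obtain ⟨v, hvV, hyv⟩ := hyV
    exact ⟨v, hvV, ⟨y, hBd hyB, hyv⟩⟩
  choose f hfV hfne using key
  -- f is injective
  have hfinj : Function.Injective f := by
    intro d e h
    obtain ⟨x, hx⟩ := hVU (hfV d)
    have hsub := hUsub x
    have hd : (Ux x ∩ (d : Set X)).Nonempty := by
      rw [hx]; exact (hfne d).mono (fun z hz => ⟨hz.2, hz.1⟩)
    have he : (Ux x ∩ (e : Set X)).Nonempty := by
      rw [hx, h]; exact (hfne e).mono (fun z hz => ⟨hz.2, hz.1⟩)
    exact Subtype.ext (hsub ⟨d.2, hd⟩ ⟨e.2, he⟩)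
  -- conclude countability
  haveI := hVc.to_subtype
  have : Countable D := Function.Injective.countable
    (f := fun d : D => (⟨f d, hfV d⟩ : V)) (fun a b h => hfinj (congrArg Subtype.val h))
  exact Set.countable_coe_iff.1 this
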